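/- arXiv:1711.10692 — 2 statements merged into one kernel-verified Lean document; each statement's English description precedes it below -/
import Mathlib

section
/- Let p_1, …, p_L ∈ [0,1] and let Z_1, …, Z_L be independent random variables where Z_i takes value 2 with probability p_i(1 − p_i), value 1 with probability (1 − p_i)², and value 0 with probability p_i. For ℓ ∈ {1, …, L} let M_ℓ = ∏_{i=1}^{ℓ} Z_i. Then for every natural number r ≥ 0, the probability that there exists ℓ ∈ {1, …, L} with M_ℓ > 2^r is at most L·2^{−r}. -/
open MeasureTheory ProbabilityTheory
open scoped ENNReal NNReal

lemma aux_nullMeasurable_of_compl {Ω : Type*} [MeasurableSpace Ω] (μ : Measure Ω)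
    [IsProbabilityMeasure μ] {A : Set Ω} (h : μ A + μ Aᶜ ≤ 1) :
    NullMeasurableSet A μ := by
  set T := toMeasurable μ A with hT
  set T' := toMeasurable μ Aᶜ with hT'
  have hTm : MeasurableSet T := measurableSet_toMeasurable μ A
  have hT'm : MeasurableSet T' := measurableSet_toMeasurable μ Aᶜ
  have hAT : A ⊆ T := subset_toMeasurable μ A
  have hAT' : Aᶜ ⊆ T' := subset_toMeasurable μ Aᶜ
  have hunion : T ∪ T' = Set.univ := by
    apply Set.eq_univ_of_univ_subset
    intro ω _
    by_cases hω : ω ∈ A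
    · exact Or.inl (hAT hω)
    · exact Or.inr (hAT' hω)
  have hadd : μ (T ∪ T') + μ (T ∩ T') = μ T + μ T' := measure_union_add_inter T hT'm
  have hμT : μ T = μ A := measure_toMeasurable A
  have hμT' : μ T' = μ Aᶜ := measure_toMeasurable Aᶜ
  have hnull : μ (T ∩ T') = 0 := by
    have h1 : (1 : ℝ≥0∞) + μ (T ∩ T') ≤ 1 + 0 := by
      rw [hunion, measure_univ] at hadd
      rw [hadd, hμT, hμT', add_zero]; exact h
    have := (ENNReal.add_le_add_iff_left ENNReal.one_ne_top).mp h1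
    exact le_antisymm this zero_le
  have hA : A = (T \ T') ∪ (A ∩ T') := by
    ext ω; constructor
    · intro hω; by_cases h' : ω ∈ T'
      · exact Or.inr ⟨hω, h'⟩
      · exact Or.inl ⟨hAT hω, h'⟩
    · rintro (⟨h1, h2⟩ | ⟨h1, _⟩)
      · by_contra hc; exact h2 (hAT' hc)
      · exact h1
  rw [hA]
  exact (hTm.diff hT'm).nullMeasurableSet.union
    (NullMeasurableSet.of_null
      (measure_mono_null (Set.inter_subset_inter_left _ hAT) hnull))

lemma aux_markov {Ω : Type*} [MeasurableSpace Ω] (μ : Measure Ω)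
    [IsProbabilityMeasure μ] {L : ℕ} (Z : Fin L → Ω → ℝ)
    (hmeas : ∀ i, Measurable (Z i)) (hnn : ∀ i ω, 0 ≤ Z i ω)
    (hind : iIndepFun Z μ)
    (hexp : ∀ i, ∫⁻ ω, ENNReal.ofReal (Z i ω) ∂μ ≤ 1)
    (r : ℕ) (S : Finset (Fin L)) :
    μ {ω | (2 : ℝ) ^ r < ∏ i ∈ S, Z i ω} ≤ (2 : ℝ≥0∞)⁻¹ ^ r := by
  set W : Fin L → Ω → ℝ≥0∞ := fun i ω => ENNReal.ofReal (Z i ω) with hW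
  have hWmeas : ∀ i, Measurable (W i) := fun i =>
    ENNReal.measurable_ofReal.comp (hmeas i)
  have hWind : iIndepFun W μ :=
    hind.comp (fun _ => ENNReal.ofReal) (fun _ => ENNReal.measurable_ofReal)
  have hprod : ∀ T : Finset (Fin L), ∫⁻ ω, ∏ i ∈ T, W i ω ∂μ ≤ 1 := by
    intro T
    induction T using Finset.induction_on with
    | empty => simp
    | @insert a T ha ih =>
      have hindep : IndepFun (fun ω => ∏ j ∈ T, W j ω) (W a) μ := by
        have := hWind.indepFun_finsetProd_of_notMem hWmeas ha
        simpa [Finset.prod_fn] using this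
      have heq : ∫⁻ ω, ∏ i ∈ insert a T, W i ω ∂μ
          = (∫⁻ ω, ∏ i ∈ T, W i ω ∂μ) * ∫⁻ ω, W a ω ∂μ := by
        have := lintegral_mul_eq_lintegral_mul_lintegral_of_indepFun
          (μ := μ) (Finset.measurable_prod T (fun i _ => hWmeas i)) (hWmeas a) hindep
        calc ∫⁻ ω, ∏ i ∈ insert a T, W i ω ∂μ
            = ∫⁻ ω, (∏ i ∈ T, W i ω) * W a ω ∂μ := by
              congr 1; funext ω; rw [Finset.prod_insert ha, mul_comm]
          _ = (∫⁻ ω, ∏ i ∈ T, W i ω ∂μ) * ∫⁻ ω, W a ω ∂μ := this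
      rw [heq]
      calc (∫⁻ ω, ∏ i ∈ T, W i ω ∂μ) * ∫⁻ ω, W a ω ∂μ
          ≤ 1 * 1 := mul_le_mul' ih (hexp a)
        _ = 1 := by simp
  have hsub : {ω | (2 : ℝ) ^ r < ∏ i ∈ S, Z i ω}
      ⊆ {ω | (2 : ℝ≥0∞) ^ r ≤ ∏ i ∈ S, W i ω} := by
    intro ω hω
    simp only [Set.mem_setOf_eq] at hω ⊢
    have h1 : ((2 : ℝ≥0∞)) ^ r = ENNReal.ofReal ((2:ℝ) ^ r) := by
      rw [ENNReal.ofReal_pow (by norm_num)]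
      norm_num
    rw [h1, ← ENNReal.ofReal_prod_of_nonneg (fun i _ => hnn i ω)]
    exact ENNReal.ofReal_le_ofReal hω.le
  calc μ {ω | (2 : ℝ) ^ r < ∏ i ∈ S, Z i ω}
      ≤ μ {ω | (2 : ℝ≥0∞) ^ r ≤ ∏ i ∈ S, W i ω} := measure_mono hsub
    _ ≤ (2 : ℝ≥0∞)⁻¹ ^ r := by
        have hm : (2 : ℝ≥0∞) ^ r * μ {ω | (2 : ℝ≥0∞) ^ r ≤ ∏ i ∈ S, W i ω}
            ≤ ∫⁻ ω, ∏ i ∈ S, W i ω ∂μ :=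
          mul_meas_ge_le_lintegral₀
            ((Finset.measurable_prod S (fun i _ => hWmeas i)).aemeasurable) _
        have hle : (2 : ℝ≥0∞) ^ r * μ {ω | (2 : ℝ≥0∞) ^ r ≤ ∏ i ∈ S, W i ω} ≤ 1 :=
          hm.trans (hprod S)
        rw [← ENNReal.inv_pow]
        rw [ENNReal.le_inv_iff_mul_le]
        rwa [mul_comm] at hle

/-- For independent random variables `Z₁, …, Z_L` where `Zᵢ` takes value `2`
with probability `pᵢ(1−pᵢ)`, value `1` with probability `(1−pᵢ)²`, and value `0`
with probability `pᵢ`, letting `M_ℓ = ∏_{i≤ℓ} Zᵢ`, for every natural `r` the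
probability that some `ℓ ∈ {1, …, L}` has `M_ℓ > 2^r` is at most `L · 2^{−r}`. -/
theorem max_product_tail_bound
    {Ω : Type*} [MeasurableSpace Ω] (μ : Measure Ω) [IsProbabilityMeasure μ]
    (L : ℕ) (p : Fin L → ℝ) (hp : ∀ i, p i ∈ Set.Icc (0 : ℝ) 1)
    (Z : Fin L → Ω → ℝ)
    (hind : iIndepFun Z μ)
    (hval : ∀ i ω, Z i ω = 0 ∨ Z i ω = 1 ∨ Z i ω = 2)
    (h2 : ∀ i, μ {ω | Z i ω = 2} = ENNReal.ofReal (p i * (1 - p i)))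
    (h1 : ∀ i, μ {ω | Z i ω = 1} = ENNReal.ofReal ((1 - p i) ^ 2))
    (h0 : ∀ i, μ {ω | Z i ω = 0} = ENNReal.ofReal (p i))
    (r : ℕ) :
    μ {ω | ∃ ℓ : ℕ, 1 ≤ ℓ ∧ ℓ ≤ L ∧
        (2 : ℝ) ^ r < ∏ i ∈ Finset.univ.filter (fun i : Fin L => (i : ℕ) < ℓ), Z i ω}
      ≤ (L : ℝ≥0∞) * (2 : ℝ≥0∞)⁻¹ ^ r := by
  -- fibers
  set B : Fin L → Set Ω := fun i => {ω | Z i ω = 1} with hB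
  set C : Fin L → Set Ω := fun i => {ω | Z i ω = 2} with hC
  have hp0 : ∀ i, 0 ≤ p i := fun i => (hp i).1
  have hp1 : ∀ i, p i ≤ 1 := fun i => (hp i).2
  -- null measurability of the fibers
  have hBnull : ∀ i, NullMeasurableSet (B i) μ := by
    intro i
    apply aux_nullMeasurable_of_compl
    have hsub : (B i)ᶜ ⊆ {ω | Z i ω = 0} ∪ C i := by
      intro ω hω
      rcases hval i ω with h | h | h
      · exact Or.inl h
      · exact absurd h hω
      · exact Or.inr h
    calc μ (B i) + μ (B i)ᶜ ≤ μ (B i) + (μ {ω | Z i ω = 0} + μ (C i)) := by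
          gcongr
          exact (measure_mono hsub).trans (measure_union_le _ _)
      _ = 1 := by
          rw [h1 i, h0 i, h2 i, ← ENNReal.ofReal_add (hp0 i) (by nlinarith [hp0 i, hp1 i]),
            ← ENNReal.ofReal_add (by positivity) (by nlinarith [hp0 i, hp1 i]),
            show (1 - p i) ^ 2 + (p i + p i * (1 - p i)) = 1 by ring]
          exact ENNReal.ofReal_one
  have hCnull : ∀ i, NullMeasurableSet (C i) μ := by
    intro i
    apply aux_nullMeasurable_of_compl
    have hsub : (C i)ᶜ ⊆ {ω | Z i ω = 0} ∪ B i := by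
      intro ω hω
      rcases hval i ω with h | h | h
      · exact Or.inl h
      · exact Or.inr h
      · exact absurd h hω
    calc μ (C i) + μ (C i)ᶜ ≤ μ (C i) + (μ {ω | Z i ω = 0} + μ (B i)) := by
          gcongr
          exact (measure_mono hsub).trans (measure_union_le _ _)
      _ = 1 := by
          rw [h1 i, h0 i, h2 i, ← ENNReal.ofReal_add (hp0 i) (by nlinarith [hp0 i, hp1 i]),
            ← ENNReal.ofReal_add (by nlinarith [hp0 i, hp1 i]) (by nlinarith [hp0 i, hp1 i])]
          rw [show p i * (1 - p i) + (p i + (1 - p i) ^ 2) = 1 by ring]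
          exact ENNReal.ofReal_one
  -- measurable versions
  set B' : Fin L → Set Ω := fun i => toMeasurable μ (B i) with hB'
  set C' : Fin L → Set Ω := fun i => toMeasurable μ (C i) \ B' i with hC'
  have hB'meas : ∀ i, MeasurableSet (B' i) := fun i => measurableSet_toMeasurable μ (B i)
  have hC'meas : ∀ i, MeasurableSet (C' i) :=
    fun i => (measurableSet_toMeasurable μ (C i)).diff (hB'meas i)
  have hdisj : ∀ i ω, ω ∈ B' i → ω ∉ C' i := fun i ω h hc => hc.2 h
  set Z' : Fin L → Ω → ℝ := fun i ω =>
    (B' i).indicator (fun _ => (1:ℝ)) ω + (C' i).indicator (fun _ => (2:ℝ)) ω with hZ'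
  have hZ'meas : ∀ i, Measurable (Z' i) := fun i =>
    (measurable_const.indicator (hB'meas i)).add (measurable_const.indicator (hC'meas i))
  have hZ'nn : ∀ i ω, 0 ≤ Z' i ω := by
    intro i ω
    apply add_nonneg <;> exact Set.indicator_nonneg (fun _ _ => by norm_num) ω
  -- a.e. equality
  have haei : ∀ i, ∀ᵐ ω ∂μ, Z i ω = Z' i ω := by
    intro i
    have hBe : ∀ᵐ ω ∂μ, ω ∈ B' i ↔ ω ∈ B i :=
      Filter.eventuallyEq_set.mp ((hBnull i).toMeasurable_ae_eq)
    have hCe : ∀ᵐ ω ∂μ, ω ∈ toMeasurable μ (C i) ↔ ω ∈ C i :=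
      Filter.eventuallyEq_set.mp ((hCnull i).toMeasurable_ae_eq)
    filter_upwards [hBe, hCe] with ω hBω hCω
    rcases hval i ω with h | h | h
    · have hnB : ω ∉ B' i := fun hh => by
        have : Z i ω = 1 := hBω.mp hh
        rw [h] at this; norm_num at this
      have hnC : ω ∉ C' i := fun hh => by
        have : Z i ω = 2 := hCω.mp hh.1
        rw [h] at this; norm_num at this
      simp [hZ', h, Set.indicator_of_notMem hnB, Set.indicator_of_notMem hnC]
    · have hmB : ω ∈ B' i := hBω.mpr h
      have hnC : ω ∉ C' i := hdisj i ω hmB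
      simp [hZ', h, Set.indicator_of_mem hmB, Set.indicator_of_notMem hnC]
    · have hnB : ω ∉ B' i := fun hh => by
        have : Z i ω = 1 := hBω.mp hh
        rw [h] at this; norm_num at this
      have hmC : ω ∈ C' i := ⟨hCω.mpr h, hnB⟩
      simp [hZ', h, Set.indicator_of_notMem hnB, Set.indicator_of_mem hmC]
  have hall : ∀ᵐ ω ∂μ, ∀ i, Z i ω = Z' i ω := ae_all_iff.mpr haei
  -- independence of Z'
  have hind' : iIndepFun Z' μ := by
    rw [iIndepFun_iff_measure_inter_preimage_eq_mul]
    intro S sets hsets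
    have h := hind.measure_inter_preimage_eq_mul S hsets
    have hpre : ∀ i : Fin L, (Z' i ⁻¹' sets i : Set Ω) =ᵐ[μ] (Z i ⁻¹' sets i) := by
      intro i
      rw [Filter.eventuallyEq_set]
      filter_upwards [haei i] with ω hω
      simp only [Set.mem_preimage, hω]
    have hInter : (⋂ i ∈ S, Z' i ⁻¹' sets i : Set Ω) =ᵐ[μ] (⋂ i ∈ S, Z i ⁻¹' sets i) := by
      rw [Filter.eventuallyEq_set]
      filter_upwards [hall] with ω hω
      simp only [Set.mem_iInter, Set.mem_preimage]
      exact forall_congr' fun i => forall_congr' fun _ => by rw [hω i]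
    rw [measure_congr hInter, h]
    exact Finset.prod_congr rfl fun i _ => (measure_congr (hpre i)).symm
  -- expectation bound
  have hexp : ∀ i, ∫⁻ ω, ENNReal.ofReal (Z' i ω) ∂μ ≤ 1 := by
    intro i
    have hpt : ∀ ω, ENNReal.ofReal (Z' i ω)
        = (B' i).indicator (fun _ => (1:ℝ≥0∞)) ω + (C' i).indicator (fun _ => (2:ℝ≥0∞)) ω := by
      intro ω
      by_cases hb : ω ∈ B' i
      · have hc : ω ∉ C' i := hdisj i ω hb
        simp [hZ', Set.indicator_of_mem hb, Set.indicator_of_notMem hc]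
      · by_cases hc : ω ∈ C' i
        · simp [hZ', Set.indicator_of_notMem hb, Set.indicator_of_mem hc]
        · simp [hZ', Set.indicator_of_notMem hb, Set.indicator_of_notMem hc]
    calc ∫⁻ ω, ENNReal.ofReal (Z' i ω) ∂μ
        = ∫⁻ ω, ((B' i).indicator (fun _ => (1:ℝ≥0∞)) ω
            + (C' i).indicator (fun _ => (2:ℝ≥0∞)) ω) ∂μ := by
          exact lintegral_congr hpt
      _ = μ (B' i) + 2 * μ (C' i) := by
          rw [lintegral_add_left (measurable_const.indicator (hB'meas i)),
            lintegral_indicator_const (hB'meas i), lintegral_indicator_const (hC'meas i),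
            one_mul]
      _ ≤ ENNReal.ofReal ((1 - p i)^2) + 2 * ENNReal.ofReal (p i * (1 - p i)) := by
          gcongr
          · rw [show μ (B' i) = μ (B i) from measure_toMeasurable (B i), h1 i]
          · calc μ (C' i) ≤ μ (toMeasurable μ (C i)) := measure_mono Set.diff_subset
              _ = μ (C i) := measure_toMeasurable (C i)
              _ = ENNReal.ofReal (p i * (1 - p i)) := h2 i
      _ ≤ 1 := by
          rw [show (2:ℝ≥0∞) = ENNReal.ofReal 2 by norm_num,
            ← ENNReal.ofReal_mul (by norm_num),
            ← ENNReal.ofReal_add (by positivity) (by nlinarith [hp0 i, hp1 i]),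
            show (1:ℝ≥0∞) = ENNReal.ofReal 1 by norm_num]
          apply ENNReal.ofReal_le_ofReal
          nlinarith [hp0 i, hp1 i]
  -- per-ℓ bound
  have hbound : ∀ ℓ : ℕ,
      μ {ω | (2:ℝ)^r < ∏ i ∈ Finset.univ.filter (fun i : Fin L => (i:ℕ) < ℓ), Z i ω}
        ≤ (2:ℝ≥0∞)⁻¹ ^ r := by
    intro ℓ
    have hcongr : ({ω | (2:ℝ)^r < ∏ i ∈ Finset.univ.filter (fun i : Fin L => (i:ℕ) < ℓ), Z i ω} : Set Ω)
        =ᵐ[μ] {ω | (2:ℝ)^r < ∏ i ∈ Finset.univ.filter (fun i : Fin L => (i:ℕ) < ℓ), Z' i ω} := by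
      rw [Filter.eventuallyEq_set]
      filter_upwards [hall] with ω hω
      have hpe : ∏ i ∈ Finset.univ.filter (fun i : Fin L => (i:ℕ) < ℓ), Z i ω
          = ∏ i ∈ Finset.univ.filter (fun i : Fin L => (i:ℕ) < ℓ), Z' i ω :=
        Finset.prod_congr rfl fun i _ => hω i
      change (2:ℝ)^r < _ ↔ (2:ℝ)^r < _
      rw [hpe]
    rw [measure_congr hcongr]
    exact aux_markov μ Z' hZ'meas hZ'nn hind' hexp r _
  -- union bound
  have hsub : {ω | ∃ ℓ : ℕ, 1 ≤ ℓ ∧ ℓ ≤ L ∧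
        (2 : ℝ) ^ r < ∏ i ∈ Finset.univ.filter (fun i : Fin L => (i : ℕ) < ℓ), Z i ω}
      ⊆ ⋃ ℓ ∈ Finset.Icc 1 L,
          {ω | (2:ℝ)^r < ∏ i ∈ Finset.univ.filter (fun i : Fin L => (i:ℕ) < ℓ), Z i ω} := by
    rintro ω ⟨ℓ, h1ℓ, hℓL, hω⟩
    exact Set.mem_biUnion (Finset.mem_Icc.mpr ⟨h1ℓ, hℓL⟩) hω
  calc μ {ω | ∃ ℓ : ℕ, 1 ≤ ℓ ∧ ℓ ≤ L ∧
        (2 : ℝ) ^ r < ∏ i ∈ Finset.univ.filter (fun i : Fin L => (i : ℕ) < ℓ), Z i ω}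
      ≤ μ (⋃ ℓ ∈ Finset.Icc 1 L,
          {ω | (2:ℝ)^r < ∏ i ∈ Finset.univ.filter (fun i : Fin L => (i:ℕ) < ℓ), Z i ω}) :=
        measure_mono hsub
    _ ≤ ∑ ℓ ∈ Finset.Icc 1 L,
          μ {ω | (2:ℝ)^r < ∏ i ∈ Finset.univ.filter (fun i : Fin L => (i:ℕ) < ℓ), Z i ω} :=
        measure_biUnion_finset_le _ _
    _ ≤ ∑ _ℓ ∈ Finset.Icc 1 L, (2:ℝ≥0∞)⁻¹ ^ r := Finset.sum_le_sum fun ℓ _ => hbound ℓ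
    _ = (L : ℝ≥0∞) * (2 : ℝ≥0∞)⁻¹ ^ r := by
        rw [Finset.sum_const, Nat.card_Icc]
        simp [nsmul_eq_mul]
end

section
/- Let k ≥ 2 be an integer, let c ≥ 1 be a real number, and let p ∈ [0,1) satisfy c·p ≤ 1 − 1/k. Then (1 − p)^{k·c} ≤ 1 − c·p; equivalently, 1 − (1 − p)^{k·c} ≥ c·p (here the exponent k·c is a real exponent). (This is the key inequality in the paper's Lemma that k·c independent copies of a Bernoulli process with biases p_i can be rejection-sampled into a process with biases c·p_i whenever c·p_i ≤ 1 − 1/k.) -/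
/-- Amplification inequality: for an integer `k ≥ 2`, a real `c ≥ 1`, and
`p ∈ [0,1)` with `c·p ≤ 1 − 1/k`, we have `(1 − p)^{k·c} ≤ 1 − c·p`
(real exponent `k·c`); equivalently `1 − (1 − p)^{k·c} ≥ c·p`. -/
theorem amplified_bernoulli_success_probability
    (k : ℕ) (hk : 2 ≤ k) (c : ℝ) (hc : 1 ≤ c) (p : ℝ)
    (hp : p ∈ Set.Ico (0 : ℝ) 1) (hcp : c * p ≤ 1 - 1 / (k : ℝ)) :
    (1 - p) ^ ((k : ℝ) * c) ≤ 1 - c * p ∧ c * p ≤ 1 - (1 - p) ^ ((k : ℝ) * c) := by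
  obtain ⟨hp0, hp1⟩ := hp
  have hk2 : (2 : ℝ) ≤ (k : ℝ) := by exact_mod_cast hk
  have hkpos : (0 : ℝ) < k := by linarith
  set x : ℝ := c * p with hxdef
  set b : ℝ := 1 - 1 / (k : ℝ) with hbdef
  have hkinv : 1 / (k : ℝ) ≤ 1 / 2 := by
    apply one_div_le_one_div_of_le <;> linarith
  have hb : (0 : ℝ) < b := by
    have : (0:ℝ) < 1 / (k:ℝ) := by positivity
    simp only [hbdef]; linarith
  have hx0 : 0 ≤ x := mul_nonneg (by linarith) hp0
  have hxb : x ≤ b := hcp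
  set t : ℝ := x / b with htdef
  have ht0 : 0 ≤ t := div_nonneg hx0 hb.le
  have ht1 : t ≤ 1 := (div_le_one hb).mpr hxb
  have htb : t * b = x := div_mul_cancel₀ x hb.ne'
  -- exp(-(k*b)) ≤ 1 - b
  have hexpb : Real.exp (-((k:ℝ) * b)) ≤ 1 - b := by
    have hkb : (k:ℝ) * b = (k:ℝ) - 1 := by
      rw [hbdef, mul_sub, mul_one, mul_one_div_cancel hkpos.ne']
    have h1 : (k:ℝ) ≤ Real.exp ((k:ℝ) - 1) := by
      have := Real.add_one_le_exp ((k:ℝ) - 1)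
      linarith
    have h2 : Real.exp (-((k:ℝ) - 1)) ≤ 1 / (k:ℝ) := by
      rw [Real.exp_neg]
      rw [inv_eq_one_div]
      exact one_div_le_one_div_of_le hkpos h1
    have h3 : (1 : ℝ) - b = 1 / (k:ℝ) := by simp [hbdef]
    rw [hkb, h3]
    exact h2
  -- convexity: exp(-(k*x)) ≤ 1 - x
  have hkey : Real.exp (-((k:ℝ) * x)) ≤ 1 - x := by
    have hconv := convexOn_exp.2 (Set.mem_univ (0:ℝ)) (Set.mem_univ (-((k:ℝ) * b)))
      (by linarith : (0:ℝ) ≤ 1 - t) ht0 (by ring)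
    simp only [smul_eq_mul, mul_zero, zero_add, Real.exp_zero, mul_one] at hconv
    have harg : t * -((k:ℝ) * b) = -((k:ℝ) * x) := by
      rw [← htb]; ring
    rw [harg] at hconv
    have : (1 - t) + t * Real.exp (-((k:ℝ) * b)) ≤ 1 - x := by
      have h4 : t * Real.exp (-((k:ℝ) * b)) ≤ t * (1 - b) :=
        mul_le_mul_of_nonneg_left hexpb ht0
      nlinarith [htb]
    linarith
  -- (1-p)^(k*c) ≤ exp(-(k*x))
  have hmain : (1 - p) ^ ((k : ℝ) * c) ≤ Real.exp (-((k:ℝ) * x)) := by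
    have h1p : (0:ℝ) ≤ 1 - p := by linarith
    have h1p' : 1 - p ≤ Real.exp (-p) := by
      have := Real.add_one_le_exp (-p); linarith
    have hkc : (0:ℝ) ≤ (k:ℝ) * c := by positivity
    calc (1 - p) ^ ((k : ℝ) * c) ≤ (Real.exp (-p)) ^ ((k : ℝ) * c) :=
          Real.rpow_le_rpow h1p h1p' hkc
      _ = Real.exp (-p * ((k:ℝ) * c)) := by rw [← Real.exp_mul]
      _ = Real.exp (-((k:ℝ) * x)) := by rw [hxdef]; ring_nf
  constructor <;> [skip; skip] <;> simp only [hxdef] at hkey hmain ⊢ <;> linarith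
end
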